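/- Let ≺ be a left-invariant order on a finitely generated group Γ that is recurrent for every cyclic subgroup, and for γ ≻ e let Λ_γ = {λ ∈ Γ : λⁿ ≺ γ for all n ∈ ℤ}. Then Λ_γ is a subgroup of Γ and is convex with respect to ≺. -/

import Mathlib

/-- `r` is a left-invariant (strict total) order on the group `Γ`. -/
def IsLeftInvariantOrder {Γ : Type*} [Group Γ] (r : Γ → Γ → Prop) : Prop :=
  (∀ a, ¬ r a a) ∧ (∀ a b c, r a b → r b c → r a c) ∧
  (∀ a b, a ≠ b → r a b ∨ r b a) ∧ (∀ γ a b, r a b → r (γ * a) (γ * b))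

/-- The order `r` is recurrent for every cyclic subgroup: for every `γ` and
every increasing chain `λ₁ ≺ ⋯ ≺ λ_r` there exist arbitrarily large positive
integers `n` with `λ₁γⁿ ≺ ⋯ ≺ λ_rγⁿ`. -/
def IsRecurrentOrder {Γ : Type*} [Group Γ] (r : Γ → Γ → Prop) : Prop :=
  ∀ (γ : Γ) (k : ℕ) (lam : Fin k → Γ),
    (∀ i j : Fin k, i < j → r (lam i) (lam j)) →
    ∀ N : ℕ, ∃ n : ℕ, N ≤ n ∧ 0 < n ∧
      ∀ i j : Fin k, i < j → r (lam i * γ ^ n) (lam j * γ ^ n)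

namespace LambdaGammaAux

variable {Γ : Type*} [Group Γ] {r : Γ → Γ → Prop}

/-- nonstrict order -/
def ple (r : Γ → Γ → Prop) (x y : Γ) : Prop := r x y ∨ x = y

section basic

variable (hr : IsLeftInvariantOrder r)
include hr

lemma lmul_iff (g : Γ) {a b : Γ} : r (g * a) (g * b) ↔ r a b := by
  constructor
  · intro h
    have := hr.2.2.2 g⁻¹ _ _ h
    simpa using this
  · exact hr.2.2.2 g a b

lemma ple_trans {a b c : Γ} (h1 : ple r a b) (h2 : ple r b c) : ple r a c := by
  rcases h1 with h1 | rfl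
  · rcases h2 with h2 | rfl
    · exact Or.inl (hr.2.1 _ _ _ h1 h2)
    · exact Or.inl h1
  · exact h2

lemma r_ple_trans {a b c : Γ} (h1 : r a b) (h2 : ple r b c) : r a c := by
  rcases h2 with h2 | rfl
  · exact hr.2.1 _ _ _ h1 h2
  · exact h1

lemma ple_r_trans {a b c : Γ} (h1 : ple r a b) (h2 : r b c) : r a c := by
  rcases h1 with h1 | rfl
  · exact hr.2.1 _ _ _ h1 h2
  · exact h2

lemma ple_total (x y : Γ) : ple r x y ∨ ple r y x := by
  by_cases h : x = y
  · exact Or.inl (Or.inr h)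
  · rcases hr.2.2.1 x y h with h' | h'
    · exact Or.inl (Or.inl h')
    · exact Or.inr (Or.inl h')

/-- max of two elements -/
lemma max2 (x y : Γ) : ∃ d, (d = x ∨ d = y) ∧ ple r x d ∧ ple r y d := by
  rcases ple_total (r := r) hr x y with h | h
  · exact ⟨y, Or.inr rfl, h, Or.inr rfl⟩
  · exact ⟨x, Or.inl rfl, Or.inr rfl, h⟩

lemma one_lt_pow {c : Γ} (hc : r 1 c) : ∀ k : ℕ, 0 < k → r 1 (c ^ k) := by
  intro k hk
  induction k with
  | zero => omega
  | succ n ih =>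
    rcases Nat.eq_zero_or_pos n with rfl | hn
    · simpa using hc
    · have h1 : r 1 (c ^ n) := ih hn
      have h2 : r c (c * c ^ n) := by
        have := hr.2.2.2 c _ _ h1
        simpa using this
      rw [pow_succ']
      exact hr.2.1 _ _ _ hc h2

lemma pow_lt_pow {c : Γ} (hc : r 1 c) {i j : ℕ} (hij : i < j) : r (c ^ i) (c ^ j) := by
  have h1 : r 1 (c ^ (j - i)) := one_lt_pow hr hc _ (by omega)
  have h2 := hr.2.2.2 (c ^ i) _ _ h1
  rw [mul_one, ← pow_add] at h2
  have : i + (j - i) = j := by omega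
  rwa [this] at h2

end basic

section tool

/-- insertion into a pairwise list -/
lemma insert_pairwise (hr : IsLeftInvariantOrder r) (x : Γ) :
    ∀ L : List Γ, L.Pairwise r →
      ∃ L' : List Γ, L'.Pairwise r ∧ x ∈ L' ∧ (∀ z ∈ L, z ∈ L') ∧
        (∀ z ∈ L', z = x ∨ z ∈ L) := by
  intro L
  induction L with
  | nil => exact fun _ => ⟨[x], List.pairwise_singleton _ _, List.mem_singleton_self x,
      fun z hz => absurd hz List.not_mem_nil, fun z hz => Or.inl (List.mem_singleton.1 hz)⟩
  | cons y T ih =>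
    intro hP
    rw [List.pairwise_cons] at hP
    by_cases hxy : x = y
    · exact ⟨y :: T, List.pairwise_cons.2 hP, by simp [hxy], fun z hz => hz,
        fun z hz => Or.inr hz⟩
    rcases hr.2.2.1 x y hxy with hlt | hgt
    · refine ⟨x :: y :: T, ?_, List.mem_cons_self, fun z hz => List.mem_cons_of_mem _ hz,
        fun z hz => ?_⟩
      · rw [List.pairwise_cons]
        refine ⟨?_, List.pairwise_cons.2 hP⟩
        intro z hz
        rcases List.mem_cons.1 hz with rfl | hz
        · exact hlt
        · exact hr.2.1 _ _ _ hlt (hP.1 z hz)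
      · rcases List.mem_cons.1 hz with rfl | hz
        · exact Or.inl rfl
        · exact Or.inr hz
    · obtain ⟨T', hT'P, hxT', hsub, hsup⟩ := ih hP.2
      refine ⟨y :: T', ?_, List.mem_cons_of_mem _ hxT', ?_, ?_⟩
      · rw [List.pairwise_cons]
        refine ⟨?_, hT'P⟩
        intro z hz
        rcases hsup z hz with rfl | hz
        · exact hgt
        · exact hP.1 z hz
      · intro z hz
        rcases List.mem_cons.1 hz with rfl | hz
        · exact List.mem_cons_self
        · exact List.mem_cons_of_mem _ (hsub z hz)
      · intro z hz
        rcases List.mem_cons.1 hz with rfl | hz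
        · exact Or.inr (List.mem_cons_self)
        · rcases hsup z hz with rfl | hz'
          · exact Or.inl rfl
          · exact Or.inr (List.mem_cons_of_mem _ hz')

lemma sorted_list (hr : IsLeftInvariantOrder r) (S : List Γ) :
    ∃ L : List Γ, L.Pairwise r ∧ ∀ z ∈ S, z ∈ L := by
  induction S with
  | nil => exact ⟨[], List.Pairwise.nil, fun z hz => absurd hz List.not_mem_nil⟩
  | cons x S ih =>
    obtain ⟨L, hLP, hLmem⟩ := ih
    obtain ⟨L', hL'P, hxL', hsub, _⟩ := insert_pairwise hr x L hLP
    refine ⟨L', hL'P, fun z hz => ?_⟩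
    rcases List.mem_cons.1 hz with rfl | hz
    · exact hxL'
    · exact hsub z (hLmem z hz)

/-- The master recurrence tool: any finite list of strict inequalities can be
simultaneously right-translated by an arbitrarily large power. -/
lemma tool (hr : IsLeftInvariantOrder r) (hrec : IsRecurrentOrder r)
    (d : Γ) (N : ℕ) (l : List (Γ × Γ)) (hl : ∀ p ∈ l, r p.1 p.2) :
    ∃ m : ℕ, N ≤ m ∧ 0 < m ∧ ∀ p ∈ l, r (p.1 * d ^ m) (p.2 * d ^ m) := by
  obtain ⟨L, hLP, hLmem⟩ := sorted_list hr (l.map Prod.fst ++ l.map Prod.snd)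
  have hchain : ∀ i j : Fin L.length, i < j → r (L.get i) (L.get j) :=
    List.pairwise_iff_get.1 hLP
  obtain ⟨m, hNm, hm0, hm⟩ := hrec d L.length L.get hchain N
  refine ⟨m, hNm, hm0, fun p hp => ?_⟩
  have h1 : p.1 ∈ L := hLmem p.1 (by
    apply List.mem_append_left; exact List.mem_map_of_mem hp)
  have h2 : p.2 ∈ L := hLmem p.2 (by
    apply List.mem_append_right; exact List.mem_map_of_mem hp)
  obtain ⟨i, hi⟩ := List.mem_iff_get.1 h1
  obtain ⟨j, hj⟩ := List.mem_iff_get.1 h2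
  have hpr : r p.1 p.2 := hl p hp
  have hij : i < j := by
    rcases lt_trichotomy i j with h | h | h
    · exact h
    · exfalso
      apply hr.1 p.1
      have he : p.1 = p.2 := by rw [← hi, ← hj, h]
      rwa [← he] at hpr
    · exfalso
      have := hchain j i h
      rw [hi, hj] at this
      exact hr.1 p.1 (hr.2.1 _ _ _ hpr this)
  have := hm i j hij
  rwa [hi, hj] at this

end tool


section main

variable (hr : IsLeftInvariantOrder r) (hrec : IsRecurrentOrder r)
include hr hrec

/-- Key lemma: if `1 ≺ c`, `h ≺ c` and `x ≺ cᵖ`, then `h*x ≺ c^q` for some `q`. -/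
lemma keyY {c h x : Γ} (hc : r 1 c) (hhc : r h c) {p : ℕ} (hx : r x (c ^ p))
    (hbad : ∀ q : ℕ, ¬ r (h * x) (c ^ q)) : False := by
  -- all powers of c are strictly below h*x
  have hlow : ∀ q : ℕ, r (c ^ q) (h * x) := by
    intro q
    rcases ple_total (r := r) hr (c ^ q) (h * x) with hq | hq
    · rcases hq with hq | hq
      · exact hq
      · exfalso
        apply hbad (q + 1)
        rw [← hq]
        exact pow_lt_pow hr hc (Nat.lt_succ_self q)
    · exact absurd (ple_r_trans hr hq (pow_lt_pow hr hc (Nat.lt_succ_self q)))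
        (by
          intro hcon
          exact hbad (q+1) hcon)
  -- Call 1
  obtain ⟨m₁, hm₁N, hm₁0, hcall1⟩ := tool hr hrec c (p + 1) [(h, c)]
    (by intro q hq; rcases List.mem_singleton.1 hq with rfl; exact hhc)
  have hC1 : r (h * c ^ m₁) (c ^ (m₁ + 1)) := by
    have := hcall1 (h, c) (List.mem_singleton_self _)
    simpa [pow_succ'] using this
  have hxm : r x (c ^ m₁) := by
    rcases Nat.lt_or_ge p m₁ with hpm | hpm
    · exact hr.2.1 _ _ _ hx (pow_lt_pow hr hc hpm)
    · have : p = m₁ ∨ m₁ < p := by omega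
      rcases this with rfl | h'
      · exact hx
      · -- p > m₁ impossible since m₁ ≥ p+1
        omega
  have hlow1 : r (c ^ (m₁ + 1)) (h * x) := hlow (m₁ + 1)
  -- Call 2
  obtain ⟨m₂, _, hm₂0, hcall2⟩ := tool hr hrec c 1
    [(x, c ^ m₁), (c ^ (m₁ + 1), h * x), (h * c ^ m₁, c ^ (m₁ + 1))]
    (by
      intro q hq
      simp only [List.mem_cons, List.mem_singleton, List.not_mem_nil, or_false] at hq
      rcases hq with rfl | rfl | rfl
      · exact hxm
      · exact hlow1
      · exact hC1)
  have ha : r (x * c ^ m₂) (c ^ (m₁ + m₂)) := by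
    have := hcall2 (x, c ^ m₁) (by simp)
    simpa [pow_add] using this
  have hb : r (c ^ (m₁ + 1 + m₂)) (h * x * c ^ m₂) := by
    have := hcall2 (c ^ (m₁ + 1), h * x) (by simp)
    simpa [pow_add] using this
  have hcc : r (h * c ^ (m₁ + m₂)) (c ^ (m₁ + 1 + m₂)) := by
    have := hcall2 (h * c ^ m₁, c ^ (m₁ + 1)) (by simp)
    simpa [pow_add, mul_assoc] using this
  have ha' : r (h * (x * c ^ m₂)) (h * c ^ (m₁ + m₂)) := hr.2.2.2 h _ _ ha
  rw [← mul_assoc] at ha'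
  have : r (c ^ (m₁ + 1 + m₂)) (c ^ (m₁ + 1 + m₂)) :=
    hr.2.1 _ _ _ hb (hr.2.1 _ _ _ ha' hcc)
  exact hr.1 _ this

/-- Step lemma: absorbing one letter bounded by `d`. -/
lemma stepd {d g x : Γ} (hd : r 1 d) (hg : ple r g d) {p : ℕ} (hx : r x (d ^ p)) :
    ∃ q : ℕ, r (g * x) (d ^ q) := by
  rcases hg with hg | rfl
  · by_contra hcon
    push_neg at hcon
    exact keyY hr hrec hd hg hx hcon
  · refine ⟨p + 1, ?_⟩
    rw [pow_succ']
    exact hr.2.2.2 g _ _ hx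

/-- Bound on powers of a two-letter product. -/
lemma prod_bound {d x y : Γ} (hd : r 1 d) (hx : ple r x d) (hy : ple r y d) :
    ∀ n : ℕ, ∃ q : ℕ, r ((x * y) ^ n) (d ^ q) := by
  intro n
  induction n with
  | zero => exact ⟨1, by simpa using hd⟩
  | succ n ih =>
    obtain ⟨p, hp⟩ := ih
    obtain ⟨q1, hq1⟩ := stepd hr hrec hd hy hp
    obtain ⟨q2, hq2⟩ := stepd hr hrec hd hx hq1
    refine ⟨q2, ?_⟩
    rw [pow_succ']
    rwa [mul_assoc]

end main

section lam

variable {γ : Γ}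

/-- From membership, bound on ℕ-powers. -/
lemma mem_nat_pow {a : Γ} (ha : ∀ n : ℤ, r (a ^ n) γ) (q : ℕ) : r (a ^ q) γ := by
  have := ha (q : ℤ)
  rwa [zpow_natCast] at this

lemma mem_inv' {a : Γ} (ha : ∀ n : ℤ, r (a ^ n) γ) : ∀ n : ℤ, r (a⁻¹ ^ n) γ := by
  intro n
  rw [inv_zpow']
  exact ha (-n)

lemma eq_one_of_ple (hr : IsLeftInvariantOrder r) {a : Γ} (h1 : ple r a 1)
    (h2 : ple r a⁻¹ 1) : a = 1 := by
  rcases h1 with h1 | h1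
  · have : r 1 a⁻¹ := by
      have := hr.2.2.2 a⁻¹ _ _ h1
      simpa using this
    rcases h2 with h2 | h2
    · exact absurd (hr.2.1 _ _ _ this h2) (hr.1 1)
    · exact inv_eq_one.1 h2
  · exact h1

/-- Main product lemma: Λ_γ is closed under products. -/
lemma prod_mem (hr : IsLeftInvariantOrder r) (hrec : IsRecurrentOrder r)
    (hγ : r 1 γ) {a b : Γ} (ha : ∀ n : ℤ, r (a ^ n) γ) (hb : ∀ n : ℤ, r (b ^ n) γ) :
    ∀ n : ℤ, r ((a * b) ^ n) γ := by
  obtain ⟨d1, hd1eq, hd1a, hd1b⟩ := max2 hr a b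
  obtain ⟨d2, hd2eq, hd2a, hd2b⟩ := max2 hr a⁻¹ b⁻¹
  obtain ⟨d, hdeq, hdd1, hdd2⟩ := max2 hr d1 d2
  have hdmem : ∀ n : ℤ, r (d ^ n) γ := by
    rcases hdeq with rfl | rfl
    · rcases hd1eq with rfl | rfl
      · exact ha
      · exact hb
    · rcases hd2eq with rfl | rfl
      · exact mem_inv' ha
      · exact mem_inv' hb
  have had : ple r a d := ple_trans hr hd1a hdd1
  have hbd : ple r b d := ple_trans hr hd1b hdd1
  have haid : ple r a⁻¹ d := ple_trans hr hd2a hdd2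
  have hbid : ple r b⁻¹ d := ple_trans hr hd2b hdd2
  rcases ple_total (r := r) hr d 1 with hd1' | hd1'
  · -- degenerate: d ⪯ 1, so a = b = 1
    have hainv : ple r a⁻¹ 1 := ple_trans hr haid hd1'
    have ha1 : a = 1 := eq_one_of_ple hr (ple_trans hr had hd1') hainv
    have hb1 : b = 1 := eq_one_of_ple hr (ple_trans hr hbd hd1') (ple_trans hr hbid hd1')
    intro n
    rw [ha1, hb1]
    simpa using hγ
  · rcases hd1' with hd1' | hd1'
    · -- main case 1 ≺ d
      intro n
      rcases n with k | k
      · obtain ⟨q, hq⟩ := prod_bound hr hrec hd1' had hbd k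
        have : r (d ^ q) γ := mem_nat_pow hdmem q
        have := hr.2.1 _ _ _ hq this
        simpa [zpow_natCast] using this
      · obtain ⟨q, hq⟩ := prod_bound hr hrec hd1' hbid haid (k + 1)
        have h2 : r (d ^ q) γ := mem_nat_pow hdmem q
        have h3 := hr.2.1 _ _ _ hq h2
        rw [zpow_negSucc]
        rwa [← mul_inv_rev, inv_pow] at h3
    · -- d = 1
      subst hd1'
      have ha1 : a = 1 := eq_one_of_ple hr had haid
      have hb1 : b = 1 := eq_one_of_ple hr hbd hbid
      intro n
      rw [ha1, hb1]
      simpa using hγ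

end lam

end LambdaGammaAux

theorem lambda_gamma_subgroup_convex {Γ : Type*} [Group Γ] (hfg : Group.FG Γ)
    (r : Γ → Γ → Prop) (hr : IsLeftInvariantOrder r) (hrec : IsRecurrentOrder r)
    (γ : Γ) (hγ : r 1 γ) :
    (1 ∈ {lam : Γ | ∀ n : ℤ, r (lam ^ n) γ}) ∧
    (∀ a b, a ∈ {lam : Γ | ∀ n : ℤ, r (lam ^ n) γ} →
      b ∈ {lam : Γ | ∀ n : ℤ, r (lam ^ n) γ} →
      a * b ∈ {lam : Γ | ∀ n : ℤ, r (lam ^ n) γ}) ∧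
    (∀ a, a ∈ {lam : Γ | ∀ n : ℤ, r (lam ^ n) γ} →
      a⁻¹ ∈ {lam : Γ | ∀ n : ℤ, r (lam ^ n) γ}) ∧
    (∀ a b g, a ∈ {lam : Γ | ∀ n : ℤ, r (lam ^ n) γ} →
      b ∈ {lam : Γ | ∀ n : ℤ, r (lam ^ n) γ} →
      r a g → r g b → g ∈ {lam : Γ | ∀ n : ℤ, r (lam ^ n) γ}) := by
  open LambdaGammaAux in
  refine ⟨?_, ?_, ?_, ?_⟩
  · intro n
    simp only [Set.mem_setOf_eq, one_zpow]
    exact hγ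
  · intro a b ha hb
    exact prod_mem hr hrec hγ ha hb
  · intro a ha
    exact mem_inv' ha
  · intro a b g ha hb rag rgb
    have ha' : ∀ n : ℤ, r (a ^ n) γ := ha
    have hb' : ∀ n : ℤ, r (b ^ n) γ := hb
    have h1w : r 1 (a⁻¹ * g) := by
      have := hr.2.2.2 a⁻¹ _ _ rag
      simpa using this
    have hwc : r (a⁻¹ * g) (a⁻¹ * b) := hr.2.2.2 a⁻¹ _ _ rgb
    have hc0 : ∀ m : ℤ, r ((a⁻¹ * b) ^ m) γ := prod_mem hr hrec hγ (mem_inv' ha') hb'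
    have hg : g = a * (a⁻¹ * g) := by simp
    obtain ⟨d1, hd1eq, hd1a, hd1b⟩ := max2 hr a a⁻¹
    obtain ⟨d2, hd2eq, hd2a, hd2b⟩ := max2 hr (a⁻¹ * b) (a⁻¹ * b)⁻¹
    obtain ⟨d, hdeq, hdd1, hdd2⟩ := max2 hr d1 d2
    have hdmem : ∀ m : ℤ, r (d ^ m) γ := by
      rcases hdeq with rfl | rfl
      · rcases hd1eq with rfl | rfl
        · exact ha'
        · exact mem_inv' ha'
      · rcases hd2eq with rfl | rfl
        · exact hc0
        · exact mem_inv' hc0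
    have had : ple r a d := ple_trans hr hd1a hdd1
    have haid : ple r a⁻¹ d := ple_trans hr hd1b hdd1
    have hc0d : ple r (a⁻¹ * b) d := ple_trans hr hd2a hdd2
    have hc0id : ple r (a⁻¹ * b)⁻¹ d := ple_trans hr hd2b hdd2
    have hwd : r (a⁻¹ * g) d := r_ple_trans hr hwc hc0d
    have hdeg : ¬ ple r d 1 := by
      intro hd1
      have ha1 : a = 1 := eq_one_of_ple hr (ple_trans hr had hd1) (ple_trans hr haid hd1)
      have hc01 : a⁻¹ * b = 1 := eq_one_of_ple hr (ple_trans hr hc0d hd1)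
        (ple_trans hr hc0id hd1)
      have hb1 : b = 1 := by
        have : b = a * (a⁻¹ * b) := by simp
        rw [this, hc01, ha1, mul_one]
      rw [ha1] at rag
      rw [hb1] at rgb
      exact hr.1 1 (hr.2.1 _ _ _ rag rgb)
    have hd1 : r 1 d := by
      rcases ple_total (r := r) hr d 1 with hd1 | hd1
      · exact absurd hd1 hdeg
      · rcases hd1 with hd1 | hd1
        · exact hd1
        · exact absurd (Or.inr hd1.symm) hdeg
    have hwd' : ple r (a⁻¹ * g) d := Or.inl hwd
    have hwinvd : ple r (a⁻¹ * g)⁻¹ d := by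
      refine Or.inl (hr.2.1 _ _ _ ?_ hd1)
      have := hr.2.2.2 (a⁻¹ * g)⁻¹ _ _ h1w
      rwa [mul_one, inv_mul_cancel] at this
    intro n
    rcases n with k | k
    · obtain ⟨q, hq⟩ := prod_bound hr hrec hd1 had hwd' k
      have h2 := hr.2.1 _ _ _ hq (mem_nat_pow hdmem q)
      rw [← hg] at h2
      simpa [zpow_natCast] using h2
    · obtain ⟨q, hq⟩ := prod_bound hr hrec hd1 hwinvd haid (k + 1)
      have h2 := hr.2.1 _ _ _ hq (mem_nat_pow hdmem q)
      rw [← mul_inv_rev, ← hg, inv_pow] at h2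
      rwa [zpow_negSucc]
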